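/- Let (X,d,μ) be a space of homogeneous type with open balls and E ⊆ X non-empty. If there exists α > 0 with d(·,E)^{-α} ∈ A₁(X,d,μ), then E is weakly porous with respect to d and μ. -/

import Mathlib

open MeasureTheory ENNReal Set

namespace WPA1

variable {X : Type*}

/-- `d` is a quasi-distance on `X` with triangular constant `K`. -/
def QD (d : X → X → ℝ) (K : ℝ) : Prop :=
  1 ≤ K ∧ (∀ x y, 0 ≤ d x y) ∧ (∀ x y, d x y = 0 ↔ x = y) ∧
    (∀ x y, d x y = d y x) ∧ ∀ x y z, d x z ≤ K * (d x y + d y z)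

/-- The `d`-ball of center `x` and radius `r`. -/
def ball (d : X → X → ℝ) (x : X) (r : ℝ) : Set X := {y | d x y < r}

/-- The optimal (least) triangular constant of `d`. -/
noncomputable def Kopt (d : X → X → ℝ) : ℝ := sInf {K | QD d K}

/-- Distance from a point to a set: `d(x,E) = inf_{e ∈ E} d(x,e)`. -/
noncomputable def distE (d : X → X → ℝ) (E : Set X) (x : X) : ℝ :=
  sInf ((d x) '' E)

/-- The maximal `E`-free hole function
`ρ_{d,E}(B_d(x,r)) = sup {0 < s ≤ 2Kr : ∃ y, B_d(y,s) ⊆ B_d(x,r) \ E}`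
(with value `0` when the set is empty, by `Real.sSup` conventions). -/
noncomputable def hole (d : X → X → ℝ) (K : ℝ) (E : Set X) (x : X) (r : ℝ) : ℝ :=
  sSup {s | 0 < s ∧ s ≤ 2 * K * r ∧ ∃ y, ball d y s ⊆ ball d x r \ E}

/-- The maximal hole function `ρ_{d,E}` is doubling with constant `C`. -/
def HoleDoubling (d : X → X → ℝ) (K : ℝ) (E : Set X) (C : ℝ) : Prop :=
  ∀ x r, 0 < r → hole d K E x (2 * r) ≤ C * hole d K E x r

/-- The `d`-balls are open and form neighborhood bases: the ambient topology is
the one induced by the quasi-distance `d`. -/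
def BallsBasis [TopologicalSpace X] (d : X → X → ℝ) : Prop :=
  (∀ x r, IsOpen (ball d x r)) ∧ ∀ x, ∀ U ∈ nhds x, ∃ r > 0, ball d x r ⊆ U

/-- The measure `μ` is doubling (with constant `A`) on `d`-balls, which have
positive finite measure; i.e. `(X,d,μ)` is a space of homogeneous type. -/
def DoublingBalls [MeasurableSpace X] (μ : Measure X) (d : X → X → ℝ) (A : ℝ) : Prop :=
  ∀ x r, 0 < r → 0 < μ (ball d x r) ∧ μ (ball d x r) < ⊤ ∧
    μ (ball d x (2 * r)) ≤ ENNReal.ofReal A * μ (ball d x r)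

/-- `E` is `(σ,γ)`-weakly porous with respect to `d` and `μ`. -/
def WeaklyPorousWith [MeasurableSpace X] (μ : Measure X) (d : X → X → ℝ) (K : ℝ)
    (E : Set X) (σ γ : ℝ) : Prop :=
  ∀ x r, 0 < r → ∃ (n : ℕ) (c : Fin n → X) (ρ : Fin n → ℝ),
    (∀ i j, i ≠ j → Disjoint (ball d (c i) (ρ i)) (ball d (c j) (ρ j))) ∧
    (∀ i, ball d (c i) (ρ i) ⊆ ball d x r \ E) ∧
    (∀ i, γ * hole d K E x r ≤ ρ i) ∧
    (∀ i, ρ i ≤ 2 * K * r) ∧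
    ENNReal.ofReal σ * μ (ball d x r) ≤ ∑ i, μ (ball d (c i) (ρ i))

/-- `E` is weakly porous with respect to `d` and `μ`. -/
def WeaklyPorous [MeasurableSpace X] (μ : Measure X) (d : X → X → ℝ) (K : ℝ)
    (E : Set X) : Prop :=
  ∃ σ γ : ℝ, σ ∈ Set.Ioo (0:ℝ) 1 ∧ γ ∈ Set.Ioo (0:ℝ) 1 ∧ WeaklyPorousWith μ d K E σ γ

/-- The weight `d(·,E)^{-α}`, valued in `ℝ≥0∞` (so it is `∞` on `{d(·,E)=0}`). -/
noncomputable def wgt (d : X → X → ℝ) (E : Set X) (α : ℝ) (x : X) : ℝ≥0∞ :=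
  ENNReal.ofReal (distE d E x) ^ (-α)

/-- `w` is an `A₁(X,d,μ)`-weight: `w` is locally integrable and the mean value of `w`
over every `d`-ball is bounded by a constant times its essential infimum there. -/
def MemA1 [MeasurableSpace X] (μ : Measure X) (d : X → X → ℝ) (w : X → ℝ≥0∞) : Prop :=
  (∀ x r, 0 < r → ∫⁻ y in ball d x r, w y ∂μ < ⊤) ∧
  ∃ C : ℝ, 0 < C ∧ ∀ x r, 0 < r →
    ∫⁻ y in ball d x r, w y ∂μ ≤
      ENNReal.ofReal C * essInf w (μ.restrict (ball d x r)) * μ (ball d x r)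


section Aux

variable {d : X → X → ℝ} {K : ℝ} {E : Set X}

lemma ball_mono (d : X → X → ℝ) (x : X) {r₁ r₂ : ℝ} (h : r₁ ≤ r₂) :
    ball d x r₁ ⊆ ball d x r₂ := fun _ hz => lt_of_lt_of_le hz h

lemma distE_nonneg (hd : QD d K) (z : X) : 0 ≤ distE d E z :=
  Real.sInf_nonneg fun t ht => by obtain ⟨e, _, rfl⟩ := ht; exact hd.2.1 z e

lemma distE_le (hd : QD d K) {e : X} (he : e ∈ E) (z : X) : distE d E z ≤ d z e :=
  csInf_le ⟨0, fun t ht => by obtain ⟨e', _, rfl⟩ := ht; exact hd.2.1 z e'⟩ ⟨e, he, rfl⟩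

lemma le_distE (hE : E.Nonempty) {z : X} {t : ℝ}
    (h : ∀ e ∈ E, t ≤ d z e) : t ≤ distE d E z :=
  le_csInf (hE.image _) fun b hb => by obtain ⟨e, he, rfl⟩ := hb; exact h e he

lemma measurable_distE [TopologicalSpace X] [MeasurableSpace X] [BorelSpace X]
    (hd : QD d K) (hb : BallsBasis d) (hE : E.Nonempty) : Measurable (distE d E) := by
  apply measurable_of_Iio
  intro t
  have hset : distE d E ⁻¹' Iio t = ⋃ e ∈ E, ball d e t := by
    ext z
    simp only [mem_preimage, mem_Iio, mem_iUnion, ball, mem_setOf_eq]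
    constructor
    · intro h
      obtain ⟨b, hbmem, hbt⟩ := exists_lt_of_csInf_lt (hE.image _) h
      obtain ⟨e, he, rfl⟩ := hbmem
      exact ⟨e, he, by rwa [hd.2.2.2.1 e z]⟩
    · rintro ⟨e, he, h⟩
      exact lt_of_le_of_lt (distE_le hd he z) (by rwa [hd.2.2.2.1 z e])
  rw [hset]
  exact (isOpen_biUnion fun e _ => hb.1 e t).measurableSet

lemma doubling_pow [MeasurableSpace X] {μ : Measure X} {A : ℝ} (hA : DoublingBalls μ d A)
    (z : X) {s : ℝ} (hs : 0 < s) : ∀ n : ℕ,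
    μ (ball d z (2 ^ n * s)) ≤ (ENNReal.ofReal A) ^ n * μ (ball d z s) := by
  intro n
  induction n with
  | zero => simp
  | succ n ih =>
    have h1 : (0:ℝ) < 2 ^ n * s := by positivity
    have harg : (2:ℝ) ^ (n+1) * s = 2 * (2 ^ n * s) := by ring
    calc μ (ball d z (2 ^ (n+1) * s)) = μ (ball d z (2 * (2 ^ n * s))) := by rw [harg]
      _ ≤ ENNReal.ofReal A * μ (ball d z (2 ^ n * s)) := (hA z _ h1).2.2
      _ ≤ ENNReal.ofReal A * ((ENNReal.ofReal A) ^ n * μ (ball d z s)) := by gcongr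
      _ = (ENNReal.ofReal A) ^ (n+1) * μ (ball d z s) := by ring

lemma one_le_Adoub [MeasurableSpace X] {μ : Measure X} {A : ℝ} (hA : DoublingBalls μ d A)
    (x0 : X) : 1 ≤ ENNReal.ofReal A := by
  have h1 := hA x0 1 one_pos
  have h2 : μ (ball d x0 1) ≤ μ (ball d x0 (2*1)) :=
    measure_mono (ball_mono d x0 (by norm_num))
  by_contra hcon
  push_neg at hcon
  have hlt : ENNReal.ofReal A * μ (ball d x0 1) < 1 * μ (ball d x0 1) :=
    by rw [mul_comm _ (μ _), mul_comm (1:ℝ≥0∞)]; exact ENNReal.mul_lt_mul_right h1.1.ne' h1.2.1.ne hcon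
  rw [one_mul] at hlt
  exact absurd (h2.trans h1.2.2) (not_le.mpr hlt)

lemma ball_subset_ball (hd : QD d K) {x y : X} {r s : ℝ}
    (h : K * (d x y + s) ≤ r) : ball d y s ⊆ ball d x r := by
  intro z hz
  have htr := hd.2.2.2.2 x y z
  have hK : 0 < K := lt_of_lt_of_le one_pos hd.1
  have hz' : d y z < s := hz
  have : d x z < K * (d x y + s) := lt_of_le_of_lt htr (by nlinarith)
  exact lt_of_lt_of_le this h

lemma disjoint_balls (hd : QD d K) {y₁ y₂ : X} {u : ℝ} (h : 2 * K * u ≤ d y₁ y₂) :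
    Disjoint (ball d y₁ u) (ball d y₂ u) := by
  rw [Set.disjoint_left]
  intro z h1 h2
  have htr := hd.2.2.2.2 y₁ z y₂
  have hsym : d z y₂ = d y₂ z := hd.2.2.2.1 z y₂
  have hK : 0 < K := lt_of_lt_of_le one_pos hd.1
  have h1' : d y₁ z < u := h1
  have h2' : d y₂ z < u := h2
  nlinarith

lemma essInf_le_of_subset [MeasurableSpace X] {ν : Measure X} {w : X → ℝ≥0∞} {P : Set X}
    {v : ℝ≥0∞} (hP : ν P ≠ 0) (hv : ∀ z ∈ P, w z ≤ v) : essInf w ν ≤ v := by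
  by_contra hcon
  push_neg at hcon
  have h0 : ν {z | w z < essInf w ν} = 0 := meas_lt_essInf
  exact hP (measure_mono_null (fun z hz => lt_of_le_of_lt (hv z hz) hcon) h0)

lemma rpow_anti {α a b : ℝ} (hα : 0 < α) (h : a ≤ b) :
    ENNReal.ofReal b ^ (-α) ≤ ENNReal.ofReal a ^ (-α) := by
  rw [ENNReal.rpow_neg, ENNReal.rpow_neg]
  exact ENNReal.inv_le_inv.mpr (ENNReal.rpow_le_rpow (ENNReal.ofReal_le_ofReal h) hα.le)

lemma packing [TopologicalSpace X] [MeasurableSpace X] [BorelSpace X]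
    {μ : Measure X} {A : ℝ} (hd : QD d K) (hb : BallsBasis d) (hA : DoublingBalls μ d A)
    {x : X} {r' u : ℝ} (hr' : 0 < r') (hu : 0 < u) (S : Set X) (hS : S ⊆ ball d x r') :
    ∃ F : Finset X, ↑F ⊆ S ∧
      (∀ y ∈ F, ∀ z ∈ F, y ≠ z → 2 * K * u ≤ d y z) ∧
      ∀ z ∈ S, ∃ y ∈ F, d y z < 2 * K * u := by
  classical
  have hK : 0 < K := lt_of_lt_of_le one_pos hd.1
  set R := K * (r' + u) with hR
  have hRpos : 0 < R := by positivity
  -- small balls centered in S live in ball x R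
  have hsmall : ∀ y ∈ S, ball d y u ⊆ ball d x R := by
    intro y hy
    apply ball_subset_ball hd
    have : d x y < r' := hS hy
    nlinarith
  -- choose N₁ with K*(r'+R) ≤ 2^N₁ * u
  obtain ⟨N₁, hN₁⟩ := pow_unbounded_of_one_lt (K * (r' + R) / u) (one_lt_two (α := ℝ))
  have hMN : K * (r' + R) ≤ 2 ^ N₁ * u := by
    rw [div_lt_iff₀ hu] at hN₁
    linarith
  have hABig : ∀ y ∈ S, ball d x R ⊆ ball d y (2 ^ N₁ * u) := by
    intro y hy z hz
    have htr := hd.2.2.2.2 y x z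
    have h1 : d y x = d x y := hd.2.2.2.1 y x
    have h2 : d x y < r' := hS hy
    have h3 : d x z < R := hz
    show d y z < 2 ^ N₁ * u
    calc d y z ≤ K * (d y x + d x z) := htr
      _ < K * (r' + R) := by rw [h1]; nlinarith
      _ ≤ 2 ^ N₁ * u := hMN
  set D₁ : ℝ≥0∞ := (ENNReal.ofReal A) ^ N₁ with hD₁
  have hA1 : 1 ≤ ENNReal.ofReal A := one_le_Adoub hA x
  have hD₁0 : D₁ ≠ 0 := by
    apply pow_ne_zero; intro h0; rw [h0] at hA1; exact absurd hA1 (by simp)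
  have hD₁top : D₁ ≠ ⊤ := by
    apply pow_ne_top ENNReal.ofReal_ne_top
  have hlower : ∀ y ∈ S, D₁⁻¹ * μ (ball d x R) ≤ μ (ball d y u) := by
    intro y hy
    have h1 : μ (ball d x R) ≤ D₁ * μ (ball d y u) :=
      (measure_mono (hABig y hy)).trans (doubling_pow hA y hu N₁)
    calc D₁⁻¹ * μ (ball d x R) ≤ D₁⁻¹ * (D₁ * μ (ball d y u)) := by gcongr
      _ = (D₁⁻¹ * D₁) * μ (ball d y u) := by rw [mul_assoc]
      _ = 1 * μ (ball d y u) := by rw [ENNReal.inv_mul_cancel hD₁0 hD₁top]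
      _ = μ (ball d y u) := one_mul _
  have hBR := hA x R hRpos
  have hterm0 : D₁⁻¹ * μ (ball d x R) ≠ 0 := by
    apply mul_ne_zero (ENNReal.inv_ne_zero.mpr hD₁top) hBR.1.ne'
  have htermtop : D₁⁻¹ * μ (ball d x R) ≠ ⊤ := by
    apply ENNReal.mul_ne_top (ENNReal.inv_ne_top.mpr hD₁0) hBR.2.1.ne
  set N : ℕ := (Nat.ceil A) ^ N₁ with hN
  have hD₁N : D₁ ≤ (N : ℝ≥0∞) := by
    rw [hN, hD₁]
    push_cast
    gcongr
    calc ENNReal.ofReal A ≤ ENNReal.ofReal (Nat.ceil A) := ENNReal.ofReal_le_ofReal (Nat.le_ceil A)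
      _ = (Nat.ceil A : ℝ≥0∞) := ENNReal.ofReal_natCast _
  -- any separated finset has card ≤ N
  have hcard : ∀ F : Finset X, ↑F ⊆ S → (∀ y ∈ F, ∀ z ∈ F, y ≠ z → 2 * K * u ≤ d y z) →
      F.card ≤ N := by
    intro F hFS hsep
    have hdisj : (↑F : Set X).PairwiseDisjoint (fun y => ball d y u) := by
      intro y hy z hz hyz
      exact disjoint_balls hd (hsep y hy z hz hyz)
    have hsum : ∑ y ∈ F, μ (ball d y u) ≤ μ (ball d x R) := by
      rw [← measure_biUnion_finset hdisj (fun y _ => (hb.1 y u).measurableSet)]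
      exact measure_mono (iUnion₂_subset fun y hy => hsmall y (hFS hy))
    have hlow : F.card • (D₁⁻¹ * μ (ball d x R)) ≤ ∑ y ∈ F, μ (ball d y u) :=
      Finset.card_nsmul_le_sum F _ _ (fun y hy => hlower y (hFS hy))
    rw [nsmul_eq_mul] at hlow
    have hfin : (F.card : ℝ≥0∞) * (D₁⁻¹ * μ (ball d x R)) ≤ D₁ * (D₁⁻¹ * μ (ball d x R)) := by
      apply (hlow.trans hsum).trans
      rw [← mul_assoc, ENNReal.mul_inv_cancel hD₁0 hD₁top, one_mul]
    have := (ENNReal.mul_le_mul_iff_left hterm0 htermtop).mp hfin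
    have hcast : (F.card : ℝ≥0∞) ≤ (N : ℝ≥0∞) := this.trans hD₁N
    exact_mod_cast hcast
  -- maximal separated finset
  set P : ℕ → Prop := fun n => ∃ F : Finset X, (↑F ⊆ S ∧
    ∀ y ∈ F, ∀ z ∈ F, y ≠ z → 2 * K * u ≤ d y z) ∧ F.card = n with hP
  have hP0 : P 0 := ⟨∅, ⟨by simp, by simp⟩, rfl⟩
  have hPmax : P (Nat.findGreatest P N) :=
    Nat.findGreatest_spec (Nat.zero_le N) hP0
  obtain ⟨F, ⟨hFS, hFsep⟩, hFcard⟩ := hPmax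
  refine ⟨F, hFS, hFsep, ?_⟩
  intro z hz
  by_contra hcon
  push_neg at hcon
  have hzF : z ∉ F := by
    intro hzF
    have := hcon z hzF
    have hzz : d z z = 0 := (hd.2.2.1 z z).mpr rfl
    nlinarith
  have hsep' : ∀ y ∈ insert z F, ∀ y' ∈ insert z F, y ≠ y' → 2 * K * u ≤ d y y' := by
    intro y hy y' hy' hne
    rcases Finset.mem_insert.mp hy with h1 | h1 <;> rcases Finset.mem_insert.mp hy' with h2 | h2
    · exact absurd (h1.trans h2.symm) hne
    · rw [h1, hd.2.2.2.1 z y']; exact hcon y' h2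
    · rw [h2]; exact hcon y h1
    · exact hFsep y h1 y' h2 hne
  have hPsucc : P (Nat.findGreatest P N + 1) := by
    refine ⟨insert z F, ⟨?_, hsep'⟩, ?_⟩
    · intro y hy
      have hy2 : y ∈ insert z F := by exact_mod_cast hy
      rcases Finset.mem_insert.mp hy2 with rfl | hy'
      · exact hz
      · exact hFS hy'
    · rw [Finset.card_insert_of_notMem hzF, hFcard]
  have hle : Nat.findGreatest P N + 1 ≤ N := by
    have h1 : (insert z F).card ≤ N := by
      apply hcard _ _ hsep'
      intro y hy
      have hy2 : y ∈ insert z F := by exact_mod_cast hy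
      rcases Finset.mem_insert.mp hy2 with rfl | hy'
      · exact hz
      · exact hFS hy'
    rwa [Finset.card_insert_of_notMem hzF, hFcard] at h1
  exact Nat.findGreatest_is_greatest (Nat.lt_succ_self _) hle hPsucc

end Aux

set_option maxHeartbeats 1000000 in
/-- If `d(·,E)^{-α} ∈ A₁(X,d,μ)` for some `α > 0`, then `E` is weakly porous. -/
theorem statement10 {X : Type*} [TopologicalSpace X] [MeasurableSpace X] [BorelSpace X]
    (μ : Measure X) (d : X → X → ℝ) (K A : ℝ)
    (hd : QD d K) (hb : BallsBasis d) (hA : DoublingBalls μ d A)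
    (E : Set X) (hE : E.Nonempty)
    (α : ℝ) (hα : 0 < α) (hA1 : MemA1 μ d (wgt d E α)) :
    WeaklyPorous μ d K E := by
  classical
  obtain ⟨hfin, C, hC, hCineq⟩ := hA1
  have hK : 0 < K := lt_of_lt_of_le one_pos hd.1
  have hKne : K ≠ 0 := hK.ne'
  have hK1 : 1 ≤ K := hd.1
  have hKK : (1:ℝ) ≤ K * K := by nlinarith [sq_nonneg (K - 1)]
  have hwmeas : Measurable (wgt d E α) :=
    (ENNReal.measurable_ofReal.comp (measurable_distE hd hb hE)).pow_const (-α)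
  have hAo1 : 1 ≤ ENNReal.ofReal A := one_le_Adoub hA hE.some
  have hAre : 1 ≤ A := ENNReal.one_le_ofReal.mp hAo1
  have hA0 : 0 < A := lt_of_lt_of_le one_pos hAre
  obtain ⟨m, hmlt⟩ := pow_unbounded_of_one_lt (2 * K) (one_lt_two (α := ℝ))
  have hm : 2 * K ≤ 2 ^ m := hmlt.le
  set Am : ℝ := A ^ m with hAmdef
  have hAmpos : 0 < Am := by positivity
  have hAm1 : 1 ≤ Am := one_le_pow₀ hAre
  set c : ℝ := (4 * K)⁻¹ * ((2 * C * Am)⁻¹) ^ (α⁻¹) with hcdef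
  have hcpos : 0 < c := by positivity
  set γ : ℝ := min c (1 / (4 * K ^ 2)) with hγdef
  have hγpos : 0 < γ := lt_min hcpos (by positivity)
  have hγlt1 : γ < 1 := by
    refine lt_of_le_of_lt (min_le_right _ _) ?_
    rw [div_lt_one (by positivity)]
    nlinarith
  set σ : ℝ := (2 * (Am * Am))⁻¹ with hσdef
  have hσpos : 0 < σ := by positivity
  have hσlt1 : σ < 1 := by
    have h1 : (1:ℝ) < 2 * (Am * Am) := by nlinarith
    rw [hσdef]
    exact inv_lt_one_of_one_lt₀ h1
  set D : ℝ≥0∞ := (ENNReal.ofReal A) ^ m with hDdef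
  have hD0 : D ≠ 0 := by
    apply pow_ne_zero
    intro h0
    rw [h0] at hAo1
    exact absurd hAo1 (by simp)
  have hDtop : D ≠ ⊤ := pow_ne_top ENNReal.ofReal_ne_top
  have hDAm : ENNReal.ofReal Am = D := by
    rw [hDdef, hAmdef, ENNReal.ofReal_pow hA0.le]
  -- real key identity
  have hkey : C * (4 * K * c) ^ α = (2 * Am)⁻¹ := by
    have h1 : 4 * K * c = ((2 * C * Am)⁻¹) ^ (α⁻¹) := by
      rw [hcdef]; field_simp
    rw [h1, Real.rpow_inv_rpow (by positivity) hα.ne']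
    field_simp
  refine ⟨σ, γ, ⟨hσpos, hσlt1⟩, ⟨hγpos, hγlt1⟩, ?_⟩
  intro x r hr
  obtain ⟨hB0, hBtop, _⟩ := hA x r hr
  set ρ := hole d K E x r with hρdef
  have hHSbdd : BddAbove {s | 0 < s ∧ s ≤ 2 * K * r ∧ ∃ y, ball d y s ⊆ ball d x r \ E} :=
    ⟨2 * K * r, fun s hs => hs.2.1⟩
  -- Step 0 : the hole is positive
  have hr0 : 0 < r / (2 * K) := by positivity
  have hZ0 : μ (ball d x (r / (2 * K)) ∩ {z | distE d E z ≤ 0}) = 0 := by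
    set Z := ball d x (r / (2 * K)) ∩ {z | distE d E z ≤ 0} with hZdef
    have hZmeas : MeasurableSet Z :=
      (hb.1 x _).measurableSet.inter ((measurable_distE hd hb hE) measurableSet_Iic)
    by_contra hne
    have hwtop : ∀ z ∈ Z, wgt d E α z = ⊤ := by
      intro z hz
      have h1 : distE d E z = 0 := le_antisymm hz.2 (distE_nonneg hd z)
      show ENNReal.ofReal (distE d E z) ^ (-α) = ⊤
      rw [h1, ENNReal.ofReal_zero]
      exact ENNReal.zero_rpow_of_neg (neg_lt_zero.mpr hα)
    have h2 : ∫⁻ z in Z, wgt d E α z ∂μ = ⊤ := by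
      rw [setLIntegral_congr_fun hZmeas (fun z hz => hwtop z hz),
        setLIntegral_const]
      exact ENNReal.top_mul hne
    have h3 : ∫⁻ z in Z, wgt d E α z ∂μ ≤ ∫⁻ z in ball d x (r / (2 * K)), wgt d E α z ∂μ :=
      lintegral_mono' (Measure.restrict_mono inter_subset_left le_rfl) le_rfl
    rw [h2] at h3
    exact (hfin x (r / (2 * K)) hr0).ne (top_le_iff.mp h3)
  have hBZpos : μ (ball d x (r / (2 * K)) \
      (ball d x (r / (2 * K)) ∩ {z | distE d E z ≤ 0})) ≠ 0 := by
    intro h0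
    have hsub : ball d x (r / (2 * K)) ⊆
        (ball d x (r / (2 * K)) ∩ {z | distE d E z ≤ 0}) ∪
        (ball d x (r / (2 * K)) \ (ball d x (r / (2 * K)) ∩ {z | distE d E z ≤ 0})) := by
      intro z hz
      by_cases hzZ : z ∈ ball d x (r / (2 * K)) ∩ {z | distE d E z ≤ 0}
      · exact Or.inl hzZ
      · exact Or.inr ⟨hz, hzZ⟩
    have : μ (ball d x (r / (2 * K))) = 0 := by
      refine le_antisymm ?_ zero_le
      calc μ (ball d x (r / (2 * K))) ≤ _ := measure_mono hsub
        _ ≤ _ + _ := measure_union_le _ _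
        _ = 0 := by rw [hZ0, h0, add_zero]
    exact (hA x _ hr0).1.ne' this
  obtain ⟨y, hy⟩ := nonempty_of_measure_ne_zero hBZpos
  have hyball : y ∈ ball d x (r / (2 * K)) := hy.1
  have hydist : 0 < distE d E y := by
    by_contra hcon
    push_neg at hcon
    exact hy.2 ⟨hyball, hcon⟩
  have hsmem : min (distE d E y) (r / (2 * K)) ∈
      {s | 0 < s ∧ s ≤ 2 * K * r ∧ ∃ y, ball d y s ⊆ ball d x r \ E} := by
    refine ⟨lt_min hydist hr0, ?_, y, ?_⟩
    · have h1 : min (distE d E y) (r / (2 * K)) ≤ r / (2 * K) := min_le_right _ _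
      have h2 : r / (2 * K) ≤ 2 * K * r := by
        rw [div_le_iff₀ (by positivity)]
        nlinarith [mul_le_mul_of_nonneg_left hKK hr.le, hr.le,
          mul_nonneg (mul_nonneg hK.le hK.le) hr.le]
      linarith
    · intro z hz
      refine ⟨?_, ?_⟩
      · have h1 : d y z < min (distE d E y) (r / (2 * K)) := hz
        have h2 : d x y < r / (2 * K) := hyball
        have htr := hd.2.2.2.2 x y z
        have h3 : min (distE d E y) (r / (2 * K)) ≤ r / (2 * K) := min_le_right _ _
        have hKr : K * (2 * (r / (2 * K))) = r := by field_simp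
        show d x z < r
        nlinarith
      · intro hzE
        have h1 : d y z < min (distE d E y) (r / (2 * K)) := hz
        have h2 : distE d E y ≤ d y z := distE_le hd hzE y
        have h3 : min (distE d E y) (r / (2 * K)) ≤ distE d E y := min_le_left _ _
        linarith
  have hρeq : ρ = sSup {s | 0 < s ∧ s ≤ 2 * K * r ∧ ∃ y, ball d y s ⊆ ball d x r \ E} := rfl
  have hρpos : 0 < ρ := by
    rw [hρeq]
    exact lt_of_lt_of_le (lt_min hydist hr0) (le_csSup hHSbdd hsmem)
  have hρ2Kr : ρ ≤ 2 * K * r := by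
    rw [hρeq]
    exact Real.sSup_le (fun s hs => hs.2.1) (by positivity)
  -- near maximal hole and essInf bound
  obtain ⟨s₀, hs₀mem, hs₀half⟩ :=
    exists_lt_of_lt_csSup ⟨_, hsmem⟩
      (show ρ / 2 < sSup {s | 0 < s ∧ s ≤ 2 * K * r ∧ ∃ y, ball d y s ⊆ ball d x r \ E} by
        rw [← hρeq]; linarith)
  obtain ⟨hs₀pos, hs₀le, y₀, hy₀⟩ := hs₀mem
  have hs₀2K : 0 < s₀ / (2 * K) := by positivity
  have hq4 : 0 < ρ / (4 * K) := by positivity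
  have hPsub : ball d y₀ (s₀ / (2 * K)) ⊆ ball d x r := by
    refine subset_trans (ball_mono d y₀ ?_) (hy₀.trans diff_subset)
    rw [div_le_iff₀ (by positivity)]
    nlinarith [mul_le_mul_of_nonneg_left hK1 hs₀pos.le, hs₀pos.le]
  have hPw : ∀ z ∈ ball d y₀ (s₀ / (2 * K)),
      wgt d E α z ≤ ENNReal.ofReal (ρ / (4 * K)) ^ (-α) := by
    intro z hz
    have hdist : ρ / (4 * K) ≤ distE d E z := by
      have h0 : s₀ / (2 * K) ≤ distE d E z := by
        apply le_distE hE
        intro e he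
        have h1 : ¬ (e ∈ ball d y₀ s₀) := fun hmem => (hy₀ hmem).2 he
        have h2 : s₀ ≤ d y₀ e := not_lt.mp h1
        have htr := hd.2.2.2.2 y₀ z e
        have h3 : d y₀ z < s₀ / (2 * K) := hz
        have hfe : K * (s₀ / (2 * K)) = s₀ / 2 := by field_simp
        have h5 : K * d y₀ z ≤ s₀ / 2 := by
          rw [← hfe]
          exact mul_le_mul_of_nonneg_left h3.le hK.le
        have h6 : s₀ / 2 ≤ K * d z e := by nlinarith
        calc s₀ / (2 * K) = (s₀ / 2) / K := by rw [div_div]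
          _ ≤ (K * d z e) / K := by gcongr
          _ = d z e := by field_simp
      have h4 : ρ / (4 * K) ≤ s₀ / (2 * K) := by
        rw [div_le_div_iff₀ (by positivity) (by positivity)]
        nlinarith [mul_pos hK (show (0:ℝ) < 2 * s₀ - ρ by linarith)]
      linarith
    exact rpow_anti hα hdist
  have hνP : μ.restrict (ball d x r) (ball d y₀ (s₀ / (2 * K))) ≠ 0 := by
    rw [Measure.restrict_apply' (hb.1 x r).measurableSet,
      inter_eq_self_of_subset_left hPsub]
    exact (hA y₀ _ hs₀2K).1.ne'
  have hess : essInf (wgt d E α) (μ.restrict (ball d x r)) ≤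
      ENNReal.ofReal (ρ / (4 * K)) ^ (-α) :=
    essInf_le_of_subset hνP hPw
  -- Markov inequality
  have htpos : 0 < c * ρ := mul_pos hcpos hρpos
  have hUw : (ball d x r ∩ {z | distE d E z < c * ρ}) ⊆
      {z | ENNReal.ofReal (c * ρ) ^ (-α) ≤ wgt d E α z} := by
    intro z hz
    exact rpow_anti hα (hz.2).le
  have hmarkov : ENNReal.ofReal (c * ρ) ^ (-α) * μ (ball d x r ∩ {z | distE d E z < c * ρ}) ≤
      ∫⁻ z in ball d x r, wgt d E α z ∂μ := by
    have h1 : μ.restrict (ball d x r) (ball d x r ∩ {z | distE d E z < c * ρ}) =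
        μ (ball d x r ∩ {z | distE d E z < c * ρ}) := by
      rw [Measure.restrict_apply' (hb.1 x r).measurableSet,
        inter_eq_self_of_subset_left inter_subset_left]
    calc ENNReal.ofReal (c * ρ) ^ (-α) * μ (ball d x r ∩ {z | distE d E z < c * ρ})
        = ENNReal.ofReal (c * ρ) ^ (-α) *
          μ.restrict (ball d x r) (ball d x r ∩ {z | distE d E z < c * ρ}) := by rw [h1]
      _ ≤ ENNReal.ofReal (c * ρ) ^ (-α) *
          μ.restrict (ball d x r) {z | ENNReal.ofReal (c * ρ) ^ (-α) ≤ wgt d E α z} := by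
          gcongr
      _ ≤ _ := mul_meas_ge_le_lintegral₀ hwmeas.aemeasurable _
  have hchain : ENNReal.ofReal (c * ρ) ^ (-α) * μ (ball d x r ∩ {z | distE d E z < c * ρ}) ≤
      ENNReal.ofReal C * ENNReal.ofReal (ρ / (4 * K)) ^ (-α) * μ (ball d x r) := by
    refine hmarkov.trans ((hCineq x r hr).trans ?_)
    gcongr
  -- extract the measure bound on U
  have hUle : μ (ball d x r ∩ {z | distE d E z < c * ρ}) ≤
      ENNReal.ofReal ((2 * Am)⁻¹) * μ (ball d x r) := by
    have ha0 : ENNReal.ofReal (ρ / (4 * K)) ≠ 0 := (ENNReal.ofReal_pos.mpr hq4).ne'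
    have hatop : ENNReal.ofReal (ρ / (4 * K)) ≠ ⊤ := ENNReal.ofReal_ne_top
    have hb0 : ENNReal.ofReal (c * ρ) ≠ 0 := (ENNReal.ofReal_pos.mpr htpos).ne'
    have hbtop' : ENNReal.ofReal (c * ρ) ≠ ⊤ := ENNReal.ofReal_ne_top
    have hba : ENNReal.ofReal (c * ρ) =
        ENNReal.ofReal (4 * K * c) * ENNReal.ofReal (ρ / (4 * K)) := by
      rw [← ENNReal.ofReal_mul (by positivity)]
      congr 1
      field_simp
    have hbb : ENNReal.ofReal (c * ρ) ^ α * ENNReal.ofReal (c * ρ) ^ (-α) = 1 := by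
      rw [← ENNReal.rpow_add _ _ hb0 hbtop', add_neg_cancel, ENNReal.rpow_zero]
    have haa : ENNReal.ofReal (ρ / (4 * K)) ^ α * ENNReal.ofReal (ρ / (4 * K)) ^ (-α) = 1 := by
      rw [← ENNReal.rpow_add _ _ ha0 hatop, add_neg_cancel, ENNReal.rpow_zero]
    calc μ (ball d x r ∩ {z | distE d E z < c * ρ})
        = (ENNReal.ofReal (c * ρ) ^ α * ENNReal.ofReal (c * ρ) ^ (-α)) *
          μ (ball d x r ∩ {z | distE d E z < c * ρ}) := by rw [hbb, one_mul]
      _ = ENNReal.ofReal (c * ρ) ^ α * (ENNReal.ofReal (c * ρ) ^ (-α) *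
          μ (ball d x r ∩ {z | distE d E z < c * ρ})) := by rw [mul_assoc]
      _ ≤ ENNReal.ofReal (c * ρ) ^ α *
          (ENNReal.ofReal C * ENNReal.ofReal (ρ / (4 * K)) ^ (-α) * μ (ball d x r)) := by
          gcongr
      _ = (ENNReal.ofReal (4 * K * c) ^ α * ENNReal.ofReal (ρ / (4 * K)) ^ α) *
          (ENNReal.ofReal C * ENNReal.ofReal (ρ / (4 * K)) ^ (-α) * μ (ball d x r)) := by
          rw [hba, ENNReal.mul_rpow_of_nonneg _ _ hα.le]
      _ = (ENNReal.ofReal (4 * K * c) ^ α * ENNReal.ofReal C) *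
          ((ENNReal.ofReal (ρ / (4 * K)) ^ α * ENNReal.ofReal (ρ / (4 * K)) ^ (-α)) *
            μ (ball d x r)) := by ring
      _ = (ENNReal.ofReal (4 * K * c) ^ α * ENNReal.ofReal C) * μ (ball d x r) := by
          rw [haa, one_mul]
      _ = ENNReal.ofReal ((2 * Am)⁻¹) * μ (ball d x r) := by
          rw [ENNReal.ofReal_rpow_of_pos (by positivity),
            ← ENNReal.ofReal_mul (by positivity)]
          congr 1
          rw [mul_comm]
          exact congrArg ENNReal.ofReal hkey
  -- lower bound for the small concentric ball
  have hr'pos : 0 < r / 2 ^ m := by positivity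
  have hr'le : r / 2 ^ m ≤ r / (2 * K) := by
    apply div_le_div_of_nonneg_left hr.le (by positivity)
    exact hm
  have hB'B : ball d x (r / 2 ^ m) ⊆ ball d x r := by
    apply ball_mono
    have h1 : r / (2 * K) ≤ r := by
      rw [div_le_iff₀ (by positivity)]
      nlinarith
    linarith [hr'le]
  have hinvD : D⁻¹ * μ (ball d x r) ≤ μ (ball d x (r / 2 ^ m)) := by
    have hBD : μ (ball d x r) ≤ D * μ (ball d x (r / 2 ^ m)) := by
      have harg : r = 2 ^ m * (r / 2 ^ m) := by field_simp
      calc μ (ball d x r) = μ (ball d x (2 ^ m * (r / 2 ^ m))) := by rw [← harg]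
        _ ≤ D * μ (ball d x (r / 2 ^ m)) := doubling_pow hA x hr'pos m
    calc D⁻¹ * μ (ball d x r) ≤ D⁻¹ * (D * μ (ball d x (r / 2 ^ m))) := by gcongr
      _ = (D⁻¹ * D) * μ (ball d x (r / 2 ^ m)) := (mul_assoc _ _ _).symm
      _ = μ (ball d x (r / 2 ^ m)) := by rw [ENNReal.inv_mul_cancel hD0 hDtop, one_mul]
  -- the set S of points far from E
  have hcover : ball d x (r / 2 ^ m) ⊆
      (ball d x r ∩ {z | distE d E z < c * ρ}) ∪
      (ball d x (r / 2 ^ m) ∩ {z | c * ρ ≤ distE d E z}) := by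
    intro z hz
    by_cases hzt : distE d E z < c * ρ
    · exact Or.inl ⟨hB'B hz, hzt⟩
    · exact Or.inr ⟨hz, not_lt.mp hzt⟩
  have h2D : ENNReal.ofReal ((2 * Am)⁻¹) = (2 * D)⁻¹ := by
    rw [ENNReal.ofReal_inv_of_pos (by positivity), ENNReal.ofReal_mul (by norm_num), hDAm,
      ENNReal.ofReal_ofNat]
  have h2Dne : (2 : ℝ≥0∞) * D ≠ 0 := mul_ne_zero two_ne_zero hD0
  have h2Dnetop : (2 : ℝ≥0∞) * D ≠ ⊤ := ENNReal.mul_ne_top ENNReal.ofNat_ne_top hDtop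
  have h2Dtop : (2 * D)⁻¹ * μ (ball d x r) ≠ ⊤ :=
    ENNReal.mul_ne_top (ENNReal.inv_ne_top.mpr h2Dne) hBtop.ne
  have hhalf : D⁻¹ = (2 * D)⁻¹ + (2 * D)⁻¹ := by
    rw [ENNReal.mul_inv (Or.inl two_ne_zero) (Or.inl ENNReal.ofNat_ne_top), ← add_mul,
      ENNReal.inv_two_add_inv_two, one_mul]
  have hSlow : (2 * D)⁻¹ * μ (ball d x r) ≤
      μ (ball d x (r / 2 ^ m) ∩ {z | c * ρ ≤ distE d E z}) := by
    have h1 : D⁻¹ * μ (ball d x r) ≤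
        μ (ball d x r ∩ {z | distE d E z < c * ρ}) +
        μ (ball d x (r / 2 ^ m) ∩ {z | c * ρ ≤ distE d E z}) :=
      hinvD.trans ((measure_mono hcover).trans (measure_union_le _ _))
    have h2 : D⁻¹ * μ (ball d x r) =
        (2 * D)⁻¹ * μ (ball d x r) + (2 * D)⁻¹ * μ (ball d x r) := by
      rw [hhalf, add_mul]
    rw [h2] at h1
    have h4 : μ (ball d x r ∩ {z | distE d E z < c * ρ}) +
        μ (ball d x (r / 2 ^ m) ∩ {z | c * ρ ≤ distE d E z}) ≤
        (2 * D)⁻¹ * μ (ball d x r) +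
        μ (ball d x (r / 2 ^ m) ∩ {z | c * ρ ≤ distE d E z}) := by
      gcongr
      rw [← h2D]
      exact hUle
    exact (ENNReal.add_le_add_iff_left h2Dtop).mp (h1.trans h4)
  -- the Vitali-type covering argument
  have hupos : 0 < γ * ρ := mul_pos hγpos hρpos
  obtain ⟨F, hFS, hFsep, hFcov⟩ := packing hd hb hA hr'pos hupos
    (ball d x (r / 2 ^ m) ∩ {z | c * ρ ≤ distE d E z}) inter_subset_left
  have hFball : ∀ y ∈ (ball d x (r / 2 ^ m) ∩ {z | c * ρ ≤ distE d E z}),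
      ball d y (γ * ρ) ⊆ ball d x r \ E := by
    intro y hy
    have hu2K : γ * ρ ≤ r / (2 * K) := by
      have h2a : γ * ρ ≤ (1 / (4 * K ^ 2)) * ρ :=
        mul_le_mul_of_nonneg_right (min_le_right _ _) hρpos.le
      have h2b : (1 / (4 * K ^ 2)) * ρ ≤ (1 / (4 * K ^ 2)) * (2 * K * r) :=
        mul_le_mul_of_nonneg_left hρ2Kr (by positivity)
      refine (h2a.trans h2b).trans (le_of_eq ?_)
      field_simp
      ring
    intro z hz
    refine ⟨?_, ?_⟩
    · refine ball_subset_ball hd ?_ hz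
      have h3 : d x y < r / (2 * K) := lt_of_lt_of_le hy.1 hr'le
      have hKr : K * (r / (2 * K) + r / (2 * K)) = r := by field_simp; ring
      nlinarith
    · intro hzE
      have h1 : c * ρ ≤ distE d E y := hy.2
      have h2 : distE d E y ≤ d y z := distE_le hd hzE y
      have h3 : d y z < γ * ρ := hz
      have h4 : γ * ρ ≤ c * ρ := mul_le_mul_of_nonneg_right (min_le_left _ _) hρpos.le
      linarith
  have hsumlow : ENNReal.ofReal σ * μ (ball d x r) ≤ ∑ y ∈ F, μ (ball d y (γ * ρ)) := by
    have hcov2 : μ (ball d x (r / 2 ^ m) ∩ {z | c * ρ ≤ distE d E z}) ≤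
        D * ∑ y ∈ F, μ (ball d y (γ * ρ)) := by
      have h1 : (ball d x (r / 2 ^ m) ∩ {z | c * ρ ≤ distE d E z}) ⊆
          ⋃ y ∈ F, ball d y (2 ^ m * (γ * ρ)) := by
        intro z hz
        obtain ⟨y, hyF, hyz⟩ := hFcov z hz
        have h2 : 2 * K * (γ * ρ) ≤ 2 ^ m * (γ * ρ) :=
          mul_le_mul_of_nonneg_right hm hupos.le
        exact mem_iUnion₂.mpr ⟨y, hyF, lt_of_lt_of_le hyz h2⟩
      calc μ (ball d x (r / 2 ^ m) ∩ {z | c * ρ ≤ distE d E z})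
          ≤ μ (⋃ y ∈ F, ball d y (2 ^ m * (γ * ρ))) := measure_mono h1
        _ ≤ ∑ y ∈ F, μ (ball d y (2 ^ m * (γ * ρ))) := measure_biUnion_finset_le F _
        _ ≤ ∑ y ∈ F, D * μ (ball d y (γ * ρ)) :=
            Finset.sum_le_sum (fun y _ => doubling_pow hA y hupos m)
        _ = D * ∑ y ∈ F, μ (ball d y (γ * ρ)) := (Finset.mul_sum _ _ _).symm
    have h1 : D⁻¹ * μ (ball d x (r / 2 ^ m) ∩ {z | c * ρ ≤ distE d E z}) ≤
        ∑ y ∈ F, μ (ball d y (γ * ρ)) := by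
      calc D⁻¹ * μ (ball d x (r / 2 ^ m) ∩ {z | c * ρ ≤ distE d E z})
          ≤ D⁻¹ * (D * ∑ y ∈ F, μ (ball d y (γ * ρ))) := by gcongr
        _ = (D⁻¹ * D) * ∑ y ∈ F, μ (ball d y (γ * ρ)) := (mul_assoc _ _ _).symm
        _ = ∑ y ∈ F, μ (ball d y (γ * ρ)) := by
            rw [ENNReal.inv_mul_cancel hD0 hDtop, one_mul]
    refine le_trans ?_ h1
    clear h1
    have h2 : ENNReal.ofReal σ = D⁻¹ * (2 * D)⁻¹ := by
      rw [hσdef, ENNReal.ofReal_inv_of_pos (by positivity), ENNReal.ofReal_mul (by norm_num),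
        ENNReal.ofReal_mul hAmpos.le, hDAm, ENNReal.ofReal_ofNat]
      have h3 : (2 : ℝ≥0∞) * (D * D) = (2 * D) * D := by ring
      rw [h3, ENNReal.mul_inv (Or.inl h2Dne) (Or.inl h2Dnetop)]
      ring
    calc ENNReal.ofReal σ * μ (ball d x r)
        = D⁻¹ * ((2 * D)⁻¹ * μ (ball d x r)) := by rw [h2, mul_assoc]
      _ ≤ D⁻¹ * μ (ball d x (r / 2 ^ m) ∩ {z | c * ρ ≤ distE d E z}) := by
          gcongr
  -- assemble the family of balls
  refine ⟨F.card, fun i => ((F.equivFin.symm i : ↥F) : X), fun _ => γ * ρ, ?_, ?_, ?_, ?_, ?_⟩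
  · intro i j hij
    refine disjoint_balls hd (hFsep _ (F.equivFin.symm i).2 _ (F.equivFin.symm j).2 ?_)
    intro hcontra
    exact hij (F.equivFin.symm.injective (Subtype.ext hcontra))
  · intro i
    exact hFball _ (hFS (F.equivFin.symm i).2)
  · intro i
    exact le_rfl
  · intro i
    have h1 : γ * ρ ≤ 1 * ρ := mul_le_mul_of_nonneg_right hγlt1.le hρpos.le
    rw [one_mul] at h1
    exact h1.trans hρ2Kr
  · have heq : ∑ i : Fin F.card, μ (ball d ((F.equivFin.symm i : ↥F) : X) (γ * ρ)) =
        ∑ y ∈ F, μ (ball d y (γ * ρ)) := by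
      rw [← Finset.sum_coe_sort F (fun y => μ (ball d y (γ * ρ)))]
      exact Equiv.sum_comp F.equivFin.symm (fun (y : ↥F) => μ (ball d (y : X) (γ * ρ)))
    rw [heq]
    exact hsumlow


end WPA1
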